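/- Let b be a prime, a an integer with (a/b) = -1, and suppose rational numbers y, z, t satisfy -a·y² = 1 + b·(z² - a·t²). Then clearing denominators to coprime integers y', z', t' (and an auxiliary integer E) with -a y'² = E² + b(z'² - a t'²), one of a or -a is a quadratic residue modulo b; hence under the hypothesis (a/b) = -1 and (-a/b) = -1, no such rationals exist. -/
import Mathlib

lemma aux_descent (b : ℕ) (hb : b.Prime) (a : ℤ) :
    ∀ n : ℕ, ∀ Y E Z T : ℤ, E.natAbs = n → E ≠ 0 →
      -a * Y ^ 2 = E ^ 2 + (b : ℤ) * (Z ^ 2 - a * T ^ 2) →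
      (IsSquare ((a : ZMod b)) ∨ IsSquare (((-a : ℤ) : ZMod b))) := by
  haveI : Fact b.Prime := ⟨hb⟩
  intro n
  induction n using Nat.strong_induction_on with
  | _ n ih =>
    intro Y E Z T hn hE heq
    have hmod : (-a : ZMod b) * (Y : ZMod b) ^ 2 = (E : ZMod b) ^ 2 := by
      have := congrArg (fun x : ℤ => (x : ZMod b)) heq
      push_cast at this
      simpa [ZMod.natCast_self] using this
    by_cases hY : (Y : ZMod b) = 0
    · -- b ∣ Y, hence b ∣ E
      have hEz : (E : ZMod b) = 0 := by
        have : (E : ZMod b) ^ 2 = 0 := by rw [← hmod, hY]; ring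
        exact pow_eq_zero_iff (n := 2) (by norm_num) |>.mp this
      have hbY : (b : ℤ) ∣ Y := by
        exact_mod_cast (ZMod.intCast_zmod_eq_zero_iff_dvd Y b).mp hY
      have hbE : (b : ℤ) ∣ E := by
        exact_mod_cast (ZMod.intCast_zmod_eq_zero_iff_dvd E b).mp hEz
      obtain ⟨Y₁, rfl⟩ := hbY
      obtain ⟨E₁, rfl⟩ := hbE
      have hb0 : (b : ℤ) ≠ 0 := by exact_mod_cast hb.ne_zero
      have heq2 : Z ^ 2 - a * T ^ 2 = (b : ℤ) * (-a * Y₁ ^ 2 - E₁ ^ 2) := by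
        have : (b : ℤ) * (Z ^ 2 - a * T ^ 2) = (b : ℤ) * ((b : ℤ) * (-a * Y₁ ^ 2 - E₁ ^ 2)) := by
          ring_nf; ring_nf at heq; linarith
        exact mul_left_cancel₀ hb0 this
      have hmod2 : (Z : ZMod b) ^ 2 = (a : ZMod b) * (T : ZMod b) ^ 2 := by
        have := congrArg (fun x : ℤ => (x : ZMod b)) heq2
        push_cast at this
        simp [ZMod.natCast_self] at this
        linear_combination this
      by_cases hT : (T : ZMod b) = 0
      · -- b ∣ T and b ∣ Z : descend
        have hZz : (Z : ZMod b) = 0 := by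
          have : (Z : ZMod b) ^ 2 = 0 := by rw [hmod2, hT]; ring
          exact pow_eq_zero_iff (n := 2) (by norm_num) |>.mp this
        have hbZ : (b : ℤ) ∣ Z := by
          exact_mod_cast (ZMod.intCast_zmod_eq_zero_iff_dvd Z b).mp hZz
        have hbT : (b : ℤ) ∣ T := by
          exact_mod_cast (ZMod.intCast_zmod_eq_zero_iff_dvd T b).mp hT
        obtain ⟨Z₁, rfl⟩ := hbZ
        obtain ⟨T₁, rfl⟩ := hbT
        have hE₁ : E₁ ≠ 0 := by
          intro h; apply hE; rw [h, mul_zero]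
        have heq3 : -a * Y₁ ^ 2 = E₁ ^ 2 + (b : ℤ) * (Z₁ ^ 2 - a * T₁ ^ 2) := by
          have : (b : ℤ) * (E₁ ^ 2 + (b : ℤ) * (Z₁ ^ 2 - a * T₁ ^ 2)) =
              (b : ℤ) * (-a * Y₁ ^ 2) := by ring_nf; ring_nf at heq2; linarith
          exact (mul_left_cancel₀ hb0 this).symm
        have hlt : E₁.natAbs < n := by
          rw [← hn, Int.natAbs_mul, Int.natAbs_natCast]
          have h1 : 1 ≤ E₁.natAbs := Nat.one_le_iff_ne_zero.mpr (by simpa using hE₁)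
          have h2 : 2 ≤ b := hb.two_le
          calc E₁.natAbs < 2 * E₁.natAbs := by omega
            _ ≤ b * E₁.natAbs := Nat.mul_le_mul_right _ h2
        exact ih _ hlt Y₁ E₁ Z₁ T₁ rfl hE₁ heq3
      · -- a is a square mod b
        left
        refine ⟨(Z : ZMod b) / (T : ZMod b), ?_⟩
        rw [div_mul_div_comm, eq_div_iff (mul_ne_zero hT hT)]
        linear_combination -hmod2
    · -- -a is a square mod b
      right
      refine ⟨(E : ZMod b) / (Y : ZMod b), ?_⟩
      push_cast
      rw [div_mul_div_comm, eq_div_iff (mul_ne_zero hY hY)]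
      linear_combination hmod

/-- Case x = 0 of the elliptic element analysis: a rational solution of
-a y² = 1 + b (z² - a t²) forces a or -a to be a quadratic residue mod b;
hence if both a and -a are nonresidues mod b, no such rationals exist. -/
theorem trace_zero_elliptic_case
    (b : ℕ) (hb : b.Prime) (a : ℤ) (ha : @legendreSym b ⟨hb⟩ a = -1)
    (y z t : ℚ)
    (heq : -(a : ℚ) * y ^ 2 = 1 + (b : ℚ) * (z ^ 2 - (a : ℚ) * t ^ 2)) :
    (IsSquare ((a : ZMod b)) ∨ IsSquare (((-a : ℤ) : ZMod b))) ∧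
      (@legendreSym b ⟨hb⟩ (-a) = -1 → False) := by
  haveI : Fact b.Prime := ⟨hb⟩
  have hy : (y.num : ℚ) = y * y.den := by
    have h := Rat.num_div_den y
    rw [div_eq_iff (by exact_mod_cast y.den_nz : ((y.den : ℚ)) ≠ 0)] at h
    exact h
  have hz : (z.num : ℚ) = z * z.den := by
    have h := Rat.num_div_den z
    rw [div_eq_iff (by exact_mod_cast z.den_nz : ((z.den : ℚ)) ≠ 0)] at h
    exact h
  have ht : (t.num : ℚ) = t * t.den := by
    have h := Rat.num_div_den t
    rw [div_eq_iff (by exact_mod_cast t.den_nz : ((t.den : ℚ)) ≠ 0)] at h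
    exact h
  have hE : ((y.den : ℤ) * z.den * t.den) ≠ 0 := by
    simp [y.den_nz, z.den_nz, t.den_nz]
  have heqZ : -a * (y.num * z.den * t.den) ^ 2 =
      ((y.den : ℤ) * z.den * t.den) ^ 2 +
        (b : ℤ) * (((y.den : ℤ) * z.num * t.den) ^ 2
          - a * ((y.den : ℤ) * z.den * t.num) ^ 2) := by
    have hq : (-a : ℚ) * ((y.num : ℚ) * z.den * t.den) ^ 2 =
        ((y.den : ℚ) * z.den * t.den) ^ 2 +
          (b : ℚ) * (((y.den : ℚ) * z.num * t.den) ^ 2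
            - (a : ℚ) * ((y.den : ℚ) * z.den * t.num) ^ 2) := by
      rw [hy, hz, ht]
      linear_combination ((y.den : ℚ) * z.den * t.den) ^ 2 * heq
    exact_mod_cast hq
  have hsq := aux_descent b hb a _ _ _ _ _ rfl hE heqZ
  refine ⟨hsq, fun hna => ?_⟩
  rcases hsq with h | h
  · exact (legendreSym.eq_neg_one_iff b).mp ha h
  · exact (legendreSym.eq_neg_one_iff b).mp hna h
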